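/- Let Λ be a nonempty set and let K ⊆ (Λ → ℝ) be a convex cone of real-valued functions (closed under addition and under multiplication by nonnegative scalars) whose linear span has finite dimension k ≥ 1, and suppose K is closed under pointwise multiplication (f, g ∈ K implies f·g ∈ K). Then there exist nonempty pairwise disjoint subsets A₁, …, A_k ⊆ Λ such that every f ∈ K can be written as f(λ) = Σ_{i=1}^k v_i·1_{A_i}(λ) with v₁, …, v_k ∈ ℝ; moreover the unordered family {A₁, …, A_k} with these properties is unique. -/
import Mathlib


open Set Polynomial Module


section aux
variable {Λ : Type*}

-- powers stay in V
theorem pow_mem_aux (V : Submodule ℝ (Λ → ℝ)) (hmulV : ∀ f ∈ V, ∀ g ∈ V, f * g ∈ V)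
    (f : Λ → ℝ) (hf : f ∈ V) : ∀ n : ℕ, f ^ (n + 1) ∈ V := by
  intro n
  induction n with
  | zero => simpa using hf
  | succ m ih => rw [pow_succ]; exact hmulV _ ih _ hf

theorem range_finite_aux (V : Submodule ℝ (Λ → ℝ)) (k : ℕ) [FiniteDimensional ℝ V]
    (hrank : finrank ℝ V = k) (hmulV : ∀ f ∈ V, ∀ g ∈ V, f * g ∈ V)
    (f : Λ → ℝ) (hf : f ∈ V) : (Set.range f).Finite := by
  have hdep : ¬ LinearIndependent ℝ
      (fun i : Fin (k+1) => (⟨f ^ (i.val + 1), pow_mem_aux V hmulV f hf i.val⟩ : V)) := by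
    intro h
    have := h.fintype_card_le_finrank
    simp [hrank] at this
  rw [Fintype.not_linearIndependent_iff] at hdep
  obtain ⟨a, hsum, i₀, hi₀⟩ := hdep
  set p : Polynomial ℝ := ∑ i : Fin (k+1), C (a i) * X ^ (i.val + 1) with hp
  have hp0 : p ≠ 0 := by
    intro h
    apply hi₀
    have hc : p.coeff (i₀.val + 1) = a i₀ := by
      rw [hp, finset_sum_coeff]
      rw [Finset.sum_eq_single i₀]
      · simp
      · intro b _ hb
        have : b.val + 1 ≠ i₀.val + 1 := by
          simp only [ne_eq, Nat.add_right_cancel_iff]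
          exact fun hh => hb (Fin.ext hh)
        simp only [coeff_C_mul, coeff_X_pow, if_neg (Ne.symm this), mul_zero]
      · simp
    rw [h] at hc
    simpa using hc.symm
  have hroot : Set.range f ⊆ {x | p.IsRoot x} := by
    rintro _ ⟨lam, rfl⟩
    have hfun : (∑ i : Fin (k+1), a i • f ^ (i.val + 1)) = (0 : Λ → ℝ) := by
      have := congrArg (Subtype.val) hsum
      simpa using this
    have := congrFun hfun lam
    simp only [Finset.sum_apply, Pi.smul_apply, Pi.pow_apply, smul_eq_mul, Pi.zero_apply] at this
    simp only [IsRoot, hp, eval_finset_sum, eval_mul, eval_C, eval_pow, eval_X, Set.mem_setOf_eq]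
    exact this
  exact (p.finite_setOf_isRoot hp0).subset hroot

theorem indicator_level_mem_aux (V : Submodule ℝ (Λ → ℝ)) (k : ℕ) [FiniteDimensional ℝ V]
    (hrank : finrank ℝ V = k) (hmulV : ∀ f ∈ V, ∀ g ∈ V, f * g ∈ V)
    (f : Λ → ℝ) (hf : f ∈ V) (c : ℝ) (hc0 : c ≠ 0) :
    Set.indicator {x | f x = c} (1 : Λ → ℝ) ∈ V := by
  by_cases hcr : c ∈ Set.range f
  · classical
    set T : Finset ℝ := insert (0:ℝ) (range_finite_aux V k hrank hmulV f hf).toFinset with hT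
    set q : Polynomial ℝ := ∏ t ∈ T.erase c, (C (c - t)⁻¹ * (X - C t)) with hq
    have h0T : (0:ℝ) ∈ T.erase c := by
      rw [Finset.mem_erase]
      exact ⟨fun h => hc0 h.symm, Finset.mem_insert_self _ _⟩
    have hq0 : q.coeff 0 = 0 := by
      rw [coeff_zero_eq_eval_zero, hq, eval_prod]
      apply Finset.prod_eq_zero h0T
      simp
    have hmem : (fun x => q.eval (f x)) ∈ V := by
      have hrep : (fun x => q.eval (f x)) = ∑ n ∈ q.support, q.coeff n • f ^ n := by
        funext x
        rw [eval_eq_sum, Polynomial.sum_def]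
        simp [Finset.sum_apply]
      rw [hrep]
      apply Submodule.sum_mem
      intro n hn
      have hn0 : n ≠ 0 := by
        intro h; rw [h] at hn; exact (Polynomial.mem_support_iff.mp hn) hq0
      obtain ⟨m, rfl⟩ := Nat.exists_eq_succ_of_ne_zero hn0
      exact Submodule.smul_mem _ _ (pow_mem_aux V hmulV f hf m)
    have heq : Set.indicator {x | f x = c} (1 : Λ → ℝ) = fun x => q.eval (f x) := by
      funext x
      by_cases hx : f x = c
      · rw [Set.indicator_of_mem (show x ∈ {x | f x = c} from hx) 1, hq, eval_prod, hx]
        rw [Finset.prod_eq_one]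
        · simp
        intro t ht
        have htc : t ≠ c := (Finset.mem_erase.mp ht).1
        simp only [eval_mul, eval_C, eval_sub, eval_X]
        rw [inv_mul_cancel₀ (sub_ne_zero.mpr (Ne.symm htc))]
      · rw [Set.indicator_of_notMem (show x ∉ {x | f x = c} from hx) 1, hq, eval_prod]
        have hfx : f x ∈ T.erase c := by
          rw [Finset.mem_erase]
          refine ⟨hx, Finset.mem_insert_of_mem ?_⟩
          rw [Set.Finite.mem_toFinset]
          exact Set.mem_range_self x
        symm
        apply Finset.prod_eq_zero hfx
        simp
    rw [heq]; exact hmem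
  · have hempty : {x | f x = c} = (∅ : Set Λ) := by
      ext x; simp only [Set.mem_setOf_eq, Set.mem_empty_iff_false, iff_false]
      exact fun h => hcr ⟨x, h⟩
    rw [hempty, Set.indicator_empty]
    exact V.zero_mem

end aux

section aux2
variable {Λ : Type*}

theorem indicator_linearIndependent {ι : Type*} (A : ι → Set Λ)
    (hne : ∀ i, (A i).Nonempty) (hdis : ∀ i j, i ≠ j → Disjoint (A i) (A j)) :
    LinearIndependent ℝ (fun i => Set.indicator (A i) (1 : Λ → ℝ)) := by
  rw [linearIndependent_iff']
  intro s g hsum i hi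
  obtain ⟨x, hx⟩ := hne i
  have hcf := congrFun hsum x
  simp only [Finset.sum_apply, Pi.smul_apply, smul_eq_mul, Pi.zero_apply] at hcf
  rw [Finset.sum_eq_single i] at hcf
  · rw [Set.indicator_of_mem hx] at hcf
    simpa using hcf
  · intro j _ hj
    have hxj : x ∉ A j := fun hxj =>
      (hdis j i hj).ne_of_mem hxj hx rfl
    rw [Set.indicator_of_notMem hxj]
    simp
  · exact fun h => absurd hi h
end aux2


open Set Polynomial Module

theorem core_structure {Λ : Type*} [Nonempty Λ] (V : Submodule ℝ (Λ → ℝ)) (k : ℕ) (hk : 1 ≤ k)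
    [FiniteDimensional ℝ V] (hrank : finrank ℝ V = k)
    (hmulV : ∀ f ∈ V, ∀ g ∈ V, f * g ∈ V) :
    ∃ A : Fin k → Set Λ,
      (∀ i, (A i).Nonempty) ∧
      (∀ i j, i ≠ j → Disjoint (A i) (A j)) ∧
      (∀ i, Set.indicator (A i) (1 : Λ → ℝ) ∈ V) ∧
      (∀ f ∈ V, ∃ v : Fin k → ℝ, f = ∑ i, v i • Set.indicator (A i) (1 : Λ → ℝ)) ∧
      (∀ C : Set Λ, C.Nonempty → Set.indicator C (1 : Λ → ℝ) ∈ V →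
        (∀ f ∈ V, ∀ y ∈ C, ∀ z ∈ C, f y = f z) → ∃ i, C = A i) := by
  classical
  set S : Set Λ := {x | ∃ f ∈ V, f x ≠ 0} with hS
  set cls : Λ → Set Λ := fun x => {y | ∀ f ∈ V, f y = f x} with hcls
  have cls_self : ∀ x, x ∈ cls x := fun x f _ => rfl
  have cls_eq : ∀ x y, y ∈ cls x → cls y = cls x := by
    intro x y hy
    ext z
    constructor
    · intro hz f hf; rw [hz f hf, hy f hf]
    · intro hz f hf; rw [hz f hf, ← hy f hf]
  have cls_subset_S : ∀ x ∈ S, cls x ⊆ S := by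
    rintro x ⟨f, hfV, hfx⟩ y hy
    exact ⟨f, hfV, by rw [hy f hfV]; exact hfx⟩
  -- key : class indicators are in V
  have key : ∀ x ∈ S, Set.indicator (cls x) (1 : Λ → ℝ) ∈ V := by
    rintro x ⟨f, hfV, hfx⟩
    set 𝒜 : Set (Set Λ) := {A | x ∈ A ∧ Set.indicator A (1 : Λ → ℝ) ∈ V} with h𝒜
    have hA0 : {y | f y = f x} ∈ 𝒜 :=
      ⟨rfl, indicator_level_mem_aux V k hrank hmulV f hfV (f x) hfx⟩
    set G : Set Λ → Set (Λ → ℝ) :=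
      fun A => {g | ∃ B ∈ 𝒜, B ⊆ A ∧ g = Set.indicator B (1 : Λ → ℝ)} with hG
    have hGle : ∀ A, Submodule.span ℝ (G A) ≤ V := by
      intro A
      rw [Submodule.span_le]
      rintro g ⟨B, hB, _, rfl⟩
      exact hB.2
    have hGfd : ∀ A, FiniteDimensional ℝ (Submodule.span ℝ (G A)) :=
      fun A => Submodule.finiteDimensional_of_le (hGle A)
    set m : Set Λ → ℕ := fun A => finrank ℝ (Submodule.span ℝ (G A)) with hm
    -- choose a minimizer of m over 𝒜
    have hne : (m '' 𝒜).Nonempty := ⟨m {y | f y = f x}, _, hA0, rfl⟩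
    obtain ⟨A₀, hA₀, hmA₀⟩ := Nat.sInf_mem hne
    have hmin : ∀ A' ∈ 𝒜, A' ⊆ A₀ → A' = A₀ := by
      intro A' hA' hsub
      by_contra hne'
      obtain ⟨μ, hμA₀, hμA'⟩ : ∃ μ, μ ∈ A₀ ∧ μ ∉ A' := by
        by_contra h
        push_neg at h
        exact hne' (Set.Subset.antisymm hsub h)
      have hlt : m A' < m A₀ := by
        have := hGfd A₀
        apply Submodule.finrank_lt_finrank_of_lt
        constructor
        · apply Submodule.span_mono
          rintro g ⟨B, hB, hBs, rfl⟩
          exact ⟨B, hB, hBs.trans hsub, rfl⟩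
        · intro hle
          have hmem : Set.indicator A₀ (1 : Λ → ℝ) ∈ Submodule.span ℝ (G A') :=
            hle (Submodule.subset_span ⟨A₀, hA₀, Set.Subset.rfl, rfl⟩)
          have hker : Submodule.span ℝ (G A') ≤
              LinearMap.ker (LinearMap.proj μ : (Λ → ℝ) →ₗ[ℝ] ℝ) := by
            rw [Submodule.span_le]
            rintro g ⟨B, hB, hBs, rfl⟩
            simp only [SetLike.mem_coe, LinearMap.mem_ker, LinearMap.proj_apply]
            exact Set.indicator_of_notMem (fun hμ => hμA' (hBs hμ)) 1
          have := hker hmem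
          simp only [LinearMap.mem_ker, LinearMap.proj_apply] at this
          rw [Set.indicator_of_mem hμA₀] at this
          simpa using this
      have : m A₀ ≤ m A' := by
        rw [hmA₀]
        exact Nat.sInf_le ⟨A', hA', rfl⟩
      omega
    -- A₀ = cls x
    have hxA₀ : x ∈ A₀ := hA₀.1
    have hsub1 : A₀ ⊆ cls x := by
      intro μ hμ
      by_contra hμc
      obtain ⟨g, hgV, hgne⟩ : ∃ g ∈ V, g μ ≠ g x := by
        by_contra h
        push_neg at h
        exact hμc h
      by_cases hgx : g x = 0
      · -- remove the level set of g μ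
        have hgμ : g μ ≠ 0 := by rw [hgx] at hgne; exact hgne
        set A' : Set Λ := A₀ \ {z | g z = g μ} with hA'
        have hiA' : Set.indicator A' (1 : Λ → ℝ) =
            Set.indicator A₀ (1 : Λ → ℝ) -
            Set.indicator A₀ (1 : Λ → ℝ) * Set.indicator {z | g z = g μ} (1 : Λ → ℝ) := by
          funext z
          by_cases h1 : z ∈ A₀ <;> by_cases h2 : g z = g μ <;>
            simp [hA', Set.indicator_apply, h1, h2]
        have hA'mem : A' ∈ 𝒜 := by
          constructor
          · exact ⟨hxA₀, by simp only [Set.mem_setOf_eq]; rw [hgx]; exact fun h => hgμ h.symm⟩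
          · rw [hiA']
            exact Submodule.sub_mem _ hA₀.2
              (hmulV _ hA₀.2 _ (indicator_level_mem_aux V k hrank hmulV g hgV (g μ) hgμ))
        have := hmin A' hA'mem Set.diff_subset
        rw [← this] at hμ
        exact hμ.2 rfl
      · set A' : Set Λ := A₀ ∩ {z | g z = g x} with hA'
        have hiA' : Set.indicator A' (1 : Λ → ℝ) =
            Set.indicator A₀ (1 : Λ → ℝ) * Set.indicator {z | g z = g x} (1 : Λ → ℝ) := by
          funext z
          by_cases h1 : z ∈ A₀ <;> by_cases h2 : g z = g x <;>
            simp [hA', Set.indicator_apply, h1, h2]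
        have hA'mem : A' ∈ 𝒜 := by
          constructor
          · exact ⟨hxA₀, rfl⟩
          · rw [hiA']
            exact hmulV _ hA₀.2 _ (indicator_level_mem_aux V k hrank hmulV g hgV (g x) hgx)
        have := hmin A' hA'mem Set.inter_subset_left
        rw [← this] at hμ
        exact hgne hμ.2
    have hsub2 : cls x ⊆ A₀ := by
      intro y hy
      have := hy _ hA₀.2
      rw [Set.indicator_of_mem hxA₀] at this
      by_contra hyA
      rw [Set.indicator_of_notMem hyA] at this
      simpa using this
    have : cls x = A₀ := Set.Subset.antisymm hsub2 hsub1
    rw [this]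
    exact hA₀.2
  -- the set of classes
  set Csets : Set (Set Λ) := cls '' S with hCsets
  have hCne : ∀ c ∈ Csets, c.Nonempty := by
    rintro c ⟨x, _, rfl⟩; exact ⟨x, cls_self x⟩
  have hCmem : ∀ c ∈ Csets, Set.indicator c (1 : Λ → ℝ) ∈ V := by
    rintro c ⟨x, hx, rfl⟩; exact key x hx
  have hCsub : ∀ c ∈ Csets, c ⊆ S := by
    rintro c ⟨x, hx, rfl⟩; exact cls_subset_S x hx
  have hCdisj : ∀ c ∈ Csets, ∀ c' ∈ Csets, c ≠ c' → Disjoint c c' := by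
    rintro c ⟨x, _, rfl⟩ c' ⟨y, _, rfl⟩ hne
    rw [Set.disjoint_left]
    intro z hzc hzc'
    exact hne ((cls_eq x z hzc).symm.trans (cls_eq y z hzc'))
  have hmemcls : ∀ (x : Λ) (c : Set Λ), c ∈ Csets → x ∈ c → cls x = c := by
    rintro x c ⟨y, _, rfl⟩ hx
    exact cls_eq y x hx
  -- linear independence of class indicators
  have hindep : LinearIndependent ℝ
      (fun c : Csets => Set.indicator (c : Set Λ) (1 : Λ → ℝ)) := by
    apply indicator_linearIndependent
    · exact fun c => hCne c c.2
    · intro c c' hne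
      exact hCdisj c c.2 c' c'.2 (fun h => hne (Subtype.ext h))
  have hindepV : LinearIndependent ℝ
      (fun c : Csets => (⟨Set.indicator (c : Set Λ) (1 : Λ → ℝ), hCmem c c.2⟩ : V)) := by
    apply LinearIndependent.of_comp (V.subtype)
    exact hindep
  have hfinC : Csets.Finite := by
    have : Finite Csets := hindepV.finite
    exact Set.toFinite Csets
  haveI := hfinC.fintype
  set pt : Set Λ → Λ := fun c => if h : c.Nonempty then h.some else Classical.arbitrary Λ with hpt
  have hptmem : ∀ c : Set Λ, c.Nonempty → pt c ∈ c := by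
    intro c hc
    simp only [hpt, dif_pos hc]
    exact hc.some_mem
  have hrep : ∀ f ∈ V, f = ∑ c ∈ hfinC.toFinset, f (pt c) • Set.indicator c (1 : Λ → ℝ) := by
    intro f hf
    funext y
    rw [Finset.sum_apply]
    by_cases hy : y ∈ S
    · have hyc : cls y ∈ Csets := ⟨y, hy, rfl⟩
      rw [Finset.sum_eq_single (cls y)]
      · rw [Pi.smul_apply, Set.indicator_of_mem (cls_self y)]
        have hmem := hptmem _ ⟨y, cls_self y⟩
        simp only [smul_eq_mul, Pi.one_apply, mul_one]
        exact (hmem f hf).symm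
      · intro c hc hne
        have hcC : c ∈ Csets := hfinC.mem_toFinset.mp hc
        have hyn : y ∉ c := fun hyc' => hne ((hmemcls y c hcC hyc').symm)
        rw [Pi.smul_apply, Set.indicator_of_notMem hyn, smul_zero]
      · intro h
        exact absurd (hfinC.mem_toFinset.mpr hyc) h
    · have hfy : f y = 0 := by
        by_contra h
        exact hy ⟨f, hf, h⟩
      rw [hfy]
      symm
      apply Finset.sum_eq_zero
      intro c hc
      have hcC : c ∈ Csets := hfinC.mem_toFinset.mp hc
      have hyn : y ∉ c := fun hyc => hy (hCsub c hcC hyc)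
      rw [Pi.smul_apply, Set.indicator_of_notMem hyn, smul_zero]
  -- a basis of V from class indicators
  set b : hfinC.toFinset → V := fun c =>
    ⟨Set.indicator (c : Set Λ) (1 : Λ → ℝ), hCmem c (hfinC.mem_toFinset.mp c.2)⟩ with hb
  have hbindep : LinearIndependent ℝ b := by
    apply LinearIndependent.of_comp (V.subtype)
    have := indicator_linearIndependent (fun c : hfinC.toFinset => (c : Set Λ))
      (fun c => hCne c (hfinC.mem_toFinset.mp c.2))
      (fun c c' hne => hCdisj _ (hfinC.mem_toFinset.mp c.2) _ (hfinC.mem_toFinset.mp c'.2)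
        (fun h => hne (Subtype.ext h)))
    exact this
  have hbspan : ⊤ ≤ Submodule.span ℝ (Set.range b) := by
    rintro ⟨f, hf⟩ _
    rw [Submodule.mem_span_range_iff_exists_fun]
    refine ⟨fun c => f (pt (c : Set Λ)), ?_⟩
    apply Subtype.ext
    have hval : ((∑ c : hfinC.toFinset, f (pt (c : Set Λ)) • b c : V) : Λ → ℝ)
        = ∑ c : hfinC.toFinset, f (pt (c : Set Λ)) • Set.indicator (c : Set Λ) (1 : Λ → ℝ) := by
      rw [AddSubmonoidClass.coe_finset_sum]
      rfl
    rw [hval, Finset.sum_coe_sort hfinC.toFinset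
      (fun c => f (pt c) • Set.indicator c (1 : Λ → ℝ))]
    exact (hrep f hf).symm
  have hbasis : Basis hfinC.toFinset ℝ V := Basis.mk hbindep hbspan
  have hcard : hfinC.toFinset.card = k := by
    have h1 := finrank_eq_card_basis hbasis
    rw [hrank, Fintype.card_coe] at h1
    exact h1.symm
  set e : hfinC.toFinset ≃ Fin k := Finset.equivFinOfCardEq hcard with he
  set A : Fin k → Set Λ := fun i => ((e.symm i : hfinC.toFinset) : Set Λ) with hA
  have hAC : ∀ i, A i ∈ Csets := fun i => hfinC.mem_toFinset.mp (e.symm i).2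
  have hAinj : Function.Injective A := by
    intro i j hij
    have := e.symm.injective (Subtype.ext hij)
    exact e.symm.injective.eq_iff.mp (Subtype.ext hij) ▸ this ▸ rfl
  refine ⟨A, fun i => hCne _ (hAC i), ?_, fun i => hCmem _ (hAC i), ?_, ?_⟩
  · intro i j hij
    exact hCdisj _ (hAC i) _ (hAC j) (fun h => hij (hAinj h))
  · intro f hf
    refine ⟨fun i => f (pt (A i)), ?_⟩
    have h1 := hrep f hf
    conv_lhs => rw [h1]
    rw [← Finset.sum_coe_sort hfinC.toFinset
      (fun c => f (pt c) • Set.indicator c (1 : Λ → ℝ))]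
    exact (Equiv.sum_comp e.symm
      (fun c => f (pt (c : Set Λ)) • Set.indicator (c : Set Λ) (1 : Λ → ℝ))).symm
  · intro C hCnon hCV hconst
    obtain ⟨x, hx⟩ := hCnon
    have hxS : x ∈ S := ⟨Set.indicator C (1 : Λ → ℝ), hCV, by
      rw [Set.indicator_of_mem hx]; exact one_ne_zero⟩
    have hCcls : C = cls x := by
      apply Set.Subset.antisymm
      · intro y hy f hf
        exact hconst f hf y hy x hx
      · intro y hy
        have h1 := hy _ hCV
        rw [Set.indicator_of_mem hx] at h1
        by_contra hyC
        rw [Set.indicator_of_notMem hyC] at h1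
        simpa using h1
    have hmemC : cls x ∈ hfinC.toFinset := hfinC.mem_toFinset.mpr ⟨x, hxS, rfl⟩
    refine ⟨e ⟨cls x, hmemC⟩, ?_⟩
    rw [hCcls, hA]
    simp


/-- STATEMENT 1: a `k`-dimensional convex cone of functions `Λ → ℝ` which is closed under
pointwise multiplication consists exactly of the functions which are constant on each of `k`
uniquely determined nonempty pairwise disjoint sets `A₁, …, A_k` and vanish elsewhere
(the banded spectral model). -/theorem banded_model_unique {Λ : Type*} [Nonempty Λ] (K : Set (Λ → ℝ)) (k : ℕ) (hk : 1 ≤ k)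
    (hadd : ∀ f ∈ K, ∀ g ∈ K, f + g ∈ K)
    (hsmul : ∀ f ∈ K, ∀ c : ℝ, 0 ≤ c → c • f ∈ K)
    (hfd : FiniteDimensional ℝ (Submodule.span ℝ K))
    (hrank : Module.finrank ℝ (Submodule.span ℝ K) = k)
    (hmul : ∀ f ∈ K, ∀ g ∈ K, f * g ∈ K) :
    ∃ A : Fin k → Set Λ,
      (∀ i, (A i).Nonempty) ∧
      (∀ i j, i ≠ j → Disjoint (A i) (A j)) ∧
      (∀ f ∈ K, ∃ v : Fin k → ℝ, ∀ lam, f lam = ∑ i, v i * (A i).indicator 1 lam) ∧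
      ∀ B : Fin k → Set Λ,
        (∀ i, (B i).Nonempty) →
        (∀ i j, i ≠ j → Disjoint (B i) (B j)) →
        (∀ f ∈ K, ∃ v : Fin k → ℝ, ∀ lam, f lam = ∑ i, v i * (B i).indicator 1 lam) →
        ∃ σ : Equiv.Perm (Fin k), ∀ i, B i = A (σ i) := by
  classical
  -- the span is closed under multiplication
  have hmul1 : ∀ g ∈ K, ∀ f ∈ Submodule.span ℝ K, f * g ∈ Submodule.span ℝ K := by
    intro g hg f hf
    induction hf using Submodule.span_induction with
    | mem x hx => exact Submodule.subset_span (hmul x hx g hg)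
    | zero => rw [zero_mul]; exact Submodule.zero_mem _
    | add x y hx hy ihx ihy => rw [add_mul]; exact Submodule.add_mem _ ihx ihy
    | smul a x hx ih => rw [smul_mul_assoc]; exact Submodule.smul_mem _ a ih
  have hmulV : ∀ f ∈ Submodule.span ℝ K, ∀ g ∈ Submodule.span ℝ K,
      f * g ∈ Submodule.span ℝ K := by
    intro f hf g hg
    induction hg using Submodule.span_induction with
    | mem x hx => exact hmul1 x hx f hf
    | zero => rw [mul_zero]; exact Submodule.zero_mem _
    | add x y hx hy ihx ihy => rw [mul_add]; exact Submodule.add_mem _ ihx ihy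
    | smul a x hx ih => rw [mul_smul_comm]; exact Submodule.smul_mem _ a ih
  obtain ⟨A, hAne, hAdis, hAmem, hArep, hAchar⟩ :=
    core_structure (Submodule.span ℝ K) k hk hrank hmulV
  refine ⟨A, hAne, hAdis, ?_, ?_⟩
  · intro f hf
    obtain ⟨v, hv⟩ := hArep f (Submodule.subset_span hf)
    refine ⟨v, fun lam => ?_⟩
    conv_lhs => rw [hv]
    rw [Finset.sum_apply]
    simp
  · intro B hBne hBdis hBrep
    set W := Submodule.span ℝ (Set.range fun j => Set.indicator (B j) (1 : Λ → ℝ)) with hW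
    have hVW : Submodule.span ℝ K ≤ W := by
      rw [Submodule.span_le]
      intro f hf
      obtain ⟨v, hv⟩ := hBrep f hf
      have hfeq : f = ∑ j, v j • Set.indicator (B j) (1 : Λ → ℝ) := by
        funext lam
        rw [hv lam, Finset.sum_apply]
        simp
      rw [hfeq]
      exact Submodule.sum_mem _ fun j _ =>
        Submodule.smul_mem _ _ (Submodule.subset_span (Set.mem_range_self j))
    haveI : FiniteDimensional ℝ W := FiniteDimensional.span_of_finite ℝ (Set.finite_range _)
    have hWle : Module.finrank ℝ W ≤ k := by
      haveI : Fintype ↑(Set.range fun j => Set.indicator (B j) (1 : Λ → ℝ)) :=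
        (Set.finite_range _).fintype
      refine (finrank_span_le_card _).trans ?_
      rw [Set.toFinset_card]
      exact (Fintype.card_range_le _).trans (by simp)
    have hVeqW : Submodule.span ℝ K = W :=
      Submodule.eq_of_le_of_finrank_le hVW (by rw [hrank]; exact hWle)
    have hBmem : ∀ j, Set.indicator (B j) (1 : Λ → ℝ) ∈ Submodule.span ℝ K := by
      intro j
      rw [hVeqW]
      exact Submodule.subset_span (Set.mem_range_self j)
    have hBconst : ∀ j, ∀ f ∈ Submodule.span ℝ K, ∀ y ∈ B j, ∀ z ∈ B j, f y = f z := by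
      intro j f hf y hy z hz
      rw [hVeqW, hW, Submodule.mem_span_range_iff_exists_fun] at hf
      obtain ⟨c, hc⟩ := hf
      have hval : ∀ w ∈ B j, f w = c j := by
        intro w hw
        rw [← hc, Finset.sum_apply]
        rw [Finset.sum_eq_single j]
        · rw [Pi.smul_apply, Set.indicator_of_mem hw]
          simp
        · intro i _ hij
          have hwn : w ∉ B i := fun hwi => (hBdis i j hij).ne_of_mem hwi hw rfl
          rw [Pi.smul_apply, Set.indicator_of_notMem hwn, smul_zero]
        · intro h; exact absurd (Finset.mem_univ j) h
      rw [hval y hy, hval z hz]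
    have hτ : ∀ j, ∃ i, B j = A i := fun j =>
      hAchar (B j) (hBne j) (hBmem j) (fun f hf y hy z hz => hBconst j f hf y hy z hz)
    choose τ hτ using hτ
    have hτinj : Function.Injective τ := by
      intro i j hij
      by_contra hne
      have hBij : B i = B j := by rw [hτ i, hτ j, hij]
      obtain ⟨x, hx⟩ := hBne i
      exact (hBdis i j hne).ne_of_mem hx (hBij ▸ hx) rfl
    exact ⟨Equiv.ofBijective τ (Finite.injective_iff_bijective.mp hτinj), fun i => hτ i⟩
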